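/- arXiv:1509.08580 — 3 statements merged into one kernel-verified Lean document; each statement's English description precedes it below -/
import Mathlib

section
/- For any letters a, b with a ≠ b and any word w of length n, we have ∂_b(sh_a(w)) - sh_a(∂_b(w)) = Θ_{b,a}(w), and for a = b, ∂_a(sh_a(w)) - sh_a(∂_a(w)) = Θ_{a,a}(w) + (n+1)w. In both cases: ∂_b ∘ sh_a - sh_a ∘ ∂_b = Θ_{b,a} + δ_{a,b}(n+1)·id on words of length n. -/
open Finsupp

variable {A : Type} [DecidableEq A]

/-- The formal sum of `Finsupp.single w 1` over a list of words. -/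
noncomputable def wordSum (l : List (List A)) : List A →₀ ℂ :=
  (l.map fun w => Finsupp.single w (1 : ℂ)).sum

/-- All words obtained from `w` by inserting the letter `a` at one position. -/
def insertions (a : A) : List A → List (List A)
  | [] => [[a]]
  | b :: t => (a :: b :: t) :: (insertions a t).map (b :: ·)

/-- All words obtained from `w` by deleting one occurrence of the letter `a`. -/
def deletions (a : A) : List A → List (List A)
  | [] => []
  | b :: t => (if b = a then [t] else []) ++ (deletions a t).map (b :: ·)

/-- All words obtained from `w` by replacing one occurrence of `b` by `a`. -/
def replacements (b a : A) : List A → List (List A)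
  | [] => []
  | c :: t => (if c = b then [a :: t] else []) ++ (replacements b a t).map (c :: ·)

/-- The insertion operator `sh_a`. -/
noncomputable def shOp (a : A) : (List A →₀ ℂ) →ₗ[ℂ] (List A →₀ ℂ) :=
  Finsupp.linearCombination ℂ (fun w => wordSum (insertions a w))

/-- The deletion operator `∂_a`. -/
noncomputable def delOp (a : A) : (List A →₀ ℂ) →ₗ[ℂ] (List A →₀ ℂ) :=
  Finsupp.linearCombination ℂ (fun w => wordSum (deletions a w))

/-- The replacement operator `Θ_{b,a}`. -/
noncomputable def repOp (b a : A) : (List A →₀ ℂ) →ₗ[ℂ] (List A →₀ ℂ) :=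
  Finsupp.linearCombination ℂ (fun w => wordSum (replacements b a w))

/-- Remove the letter at position `i` of `w` and reinsert it at position `j` (0-based). -/
def moveCard (w : List A) (i j : ℕ) : List A :=
  match w[i]? with
  | Option.none => w
  | Option.some c => (w.eraseIdx i).insertIdx j c

/-- The random-to-random operator applied to a single word: the sum over all ordered
pairs of positions `(i, j)` of removing the letter at position `i` and reinserting it
at position `j` (the diagonal `i = j` contributes `w.length • w`). -/
noncomputable def r2rWord (w : List A) : List A →₀ ℂ :=
  ∑ i ∈ Finset.range w.length, ∑ j ∈ Finset.range w.length,
    Finsupp.single (moveCard w i j) (1 : ℂ)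

/-- The (unnormalized) random-to-random operator `R2R`. -/
noncomputable def r2rOp : (List A →₀ ℂ) →ₗ[ℂ] (List A →₀ ℂ) :=
  Finsupp.linearCombination ℂ r2rWord

/-- Random-to-top on a single word: move the letter at each position to the end. -/
noncomputable def r2tWord (w : List A) : List A →₀ ℂ :=
  ∑ i ∈ Finset.range w.length, Finsupp.single (moveCard w i (w.length - 1)) (1 : ℂ)

/-- The (unnormalized) random-to-top operator `R2T`. -/
noncomputable def r2tOp : (List A →₀ ℂ) →ₗ[ℂ] (List A →₀ ℂ) :=
  Finsupp.linearCombination ℂ r2tWord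

/-- Top-to-random on a single word: move the last letter to each position. -/
noncomputable def t2rWord (w : List A) : List A →₀ ℂ :=
  ∑ j ∈ Finset.range w.length, Finsupp.single (moveCard w (w.length - 1) j) (1 : ℂ)

/-- The (unnormalized) top-to-random operator `T2R`. -/
noncomputable def t2rOp : (List A →₀ ℂ) →ₗ[ℂ] (List A →₀ ℂ) :=
  Finsupp.linearCombination ℂ t2rWord

-- auxiliary lemmas
lemma wordSum_nil : (wordSum ([] : List (List A))) = 0 := rfl

lemma wordSum_cons (u : List A) (l : List (List A)) :
    wordSum (u :: l) = Finsupp.single u 1 + wordSum l := by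
  simp [wordSum]

lemma wordSum_append (l₁ l₂ : List (List A)) :
    wordSum (l₁ ++ l₂) = wordSum l₁ + wordSum l₂ := by
  simp [wordSum]

lemma wordSum_map (f : List A → List A) (l : List (List A)) :
    wordSum (l.map f) = Finsupp.mapDomain f (wordSum l) := by
  induction l with
  | nil => simp [wordSum]
  | cons u t ih =>
      simp only [List.map_cons, wordSum_cons, Finsupp.mapDomain_add,
        Finsupp.mapDomain_single, ih]

lemma shOp_single (a : A) (w : List A) :
    shOp a (Finsupp.single w (1 : ℂ)) = wordSum (insertions a w) := by
  simp [shOp, Finsupp.linearCombination_single]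

lemma delOp_single (a : A) (w : List A) :
    delOp a (Finsupp.single w (1 : ℂ)) = wordSum (deletions a w) := by
  simp [delOp, Finsupp.linearCombination_single]

lemma repOp_single (b a : A) (w : List A) :
    repOp b a (Finsupp.single w (1 : ℂ)) = wordSum (replacements b a w) := by
  simp [repOp, Finsupp.linearCombination_single]

lemma sh_single_cons (a c : A) (t : List A) :
    shOp a (Finsupp.single (c :: t) (1 : ℂ)) =
      Finsupp.single (a :: c :: t) 1 +
        Finsupp.mapDomain (List.cons c) (shOp a (Finsupp.single t 1)) := by
  rw [shOp_single, shOp_single]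
  simp [insertions, wordSum_cons, wordSum_map]

lemma del_single_cons (b c : A) (t : List A) :
    delOp b (Finsupp.single (c :: t) (1 : ℂ)) =
      (if c = b then Finsupp.single t 1 else 0) +
        Finsupp.mapDomain (List.cons c) (delOp b (Finsupp.single t 1)) := by
  rw [delOp_single, delOp_single]
  simp only [deletions, wordSum_append, wordSum_map]
  congr 1
  split_ifs <;> simp [wordSum]

lemma rep_single_cons (b a c : A) (t : List A) :
    repOp b a (Finsupp.single (c :: t) (1 : ℂ)) =
      (if c = b then Finsupp.single (a :: t) 1 else 0) +
        Finsupp.mapDomain (List.cons c) (repOp b a (Finsupp.single t 1)) := by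
  rw [repOp_single, repOp_single]
  simp only [replacements, wordSum_append, wordSum_map]
  congr 1
  split_ifs <;> simp [wordSum]

lemma del_mapDomain (b c : A) (x : List A →₀ ℂ) :
    delOp b (Finsupp.mapDomain (List.cons c) x) =
      (if c = b then x else 0) +
        Finsupp.mapDomain (List.cons c) (delOp b x) := by
  induction x using Finsupp.induction_linear with
  | zero => simp
  | add f g hf hg =>
      simp only [Finsupp.mapDomain_add, map_add, hf, hg]
      split_ifs <;> abel
  | single u r =>
      have hru : (Finsupp.single u r : List A →₀ ℂ) = r • Finsupp.single u 1 := by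
        simp [Finsupp.smul_single]
      rw [hru, Finsupp.mapDomain_smul, map_smul, Finsupp.mapDomain_single,
        map_smul]
      have : (Finsupp.single (c :: u) (1:ℂ)) = Finsupp.single (c :: u) 1 := rfl
      rw [show delOp b (Finsupp.single (c :: u) (1:ℂ)) =
        (if c = b then Finsupp.single u 1 else 0) +
          Finsupp.mapDomain (List.cons c) (delOp b (Finsupp.single u 1)) from
        del_single_cons b c u]
      rw [smul_add, Finsupp.mapDomain_smul]
      split_ifs <;> simp

lemma sh_mapDomain (a c : A) (x : List A →₀ ℂ) :
    shOp a (Finsupp.mapDomain (List.cons c) x) =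
      Finsupp.mapDomain (List.cons a) (Finsupp.mapDomain (List.cons c) x) +
        Finsupp.mapDomain (List.cons c) (shOp a x) := by
  induction x using Finsupp.induction_linear with
  | zero => simp
  | add f g hf hg =>
      simp only [Finsupp.mapDomain_add, map_add, hf, hg]; abel
  | single u r =>
      have hru : (Finsupp.single u r : List A →₀ ℂ) = r • Finsupp.single u 1 := by
        simp [Finsupp.smul_single]
      rw [hru, Finsupp.mapDomain_smul, map_smul, Finsupp.mapDomain_single]
      rw [show shOp a (Finsupp.single (c :: u) (1:ℂ)) =
        Finsupp.single (a :: c :: u) 1 +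
          Finsupp.mapDomain (List.cons c) (shOp a (Finsupp.single u 1)) from
        sh_single_cons a c u]
      simp [smul_add, Finsupp.mapDomain_smul, Finsupp.mapDomain_single,
        map_smul]
      rw [hru, map_smul, Finsupp.mapDomain_smul]

/-- **Lemma 36, Equation (13).** On words of length `n`,
`∂_b ∘ sh_a - sh_a ∘ ∂_b = Θ_{b,a} + δ_{a,b} (n+1) id`. -/
theorem del_comp_sh_sub_sh_comp_del (a b : A) (n : ℕ) (w : List A) (hw : w.length = n) :
    delOp b (shOp a (Finsupp.single w (1 : ℂ))) -
      shOp a (delOp b (Finsupp.single w (1 : ℂ))) =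
    repOp b a (Finsupp.single w (1 : ℂ)) +
      (if a = b then ((n : ℂ) + 1) else 0) • Finsupp.single w (1 : ℂ) := by
  subst hw
  induction w with
  | nil =>
      have h0 : delOp b (Finsupp.single ([] : List A) (1 : ℂ)) = 0 := by
        rw [delOp_single]; rfl
      have h0' : repOp b a (Finsupp.single ([] : List A) (1 : ℂ)) = 0 := by
        rw [repOp_single]; rfl
      have h1 : shOp a (Finsupp.single ([] : List A) (1 : ℂ)) =
          Finsupp.single [a] 1 := by
        rw [shOp_single]; simp [insertions, wordSum]
      rw [h0, h0', h1, map_zero, del_single_cons b a, h0]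
      simp only [Finsupp.mapDomain_zero, add_zero, List.length_nil,
        Nat.cast_zero, zero_add, sub_zero]
      split_ifs <;> simp
  | cons c t ih =>
      have IH : delOp b (shOp a (Finsupp.single t (1 : ℂ))) =
          shOp a (delOp b (Finsupp.single t 1)) +
            (repOp b a (Finsupp.single t 1) +
              (if a = b then ((t.length : ℂ) + 1) else 0) • Finsupp.single t 1) := by
        rw [← ih]; abel
      simp only [sh_single_cons, map_add, del_mapDomain, IH, del_single_cons,
        rep_single_cons, sh_mapDomain, map_smul, Finsupp.mapDomain_add,
        Finsupp.mapDomain_smul, apply_ite (shOp a),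
        apply_ite (Finsupp.mapDomain (List.cons a)),
        apply_ite (Finsupp.mapDomain (List.cons c)), map_zero,
        Finsupp.mapDomain_zero, Finsupp.mapDomain_single, List.length_cons,
        smul_add]
      split_ifs <;> push_cast <;> module
end

section
/- The identity R2R_{n+1} ∘ sh_a - sh_a ∘ R2R_n = sh_a + Σ_{b=1}^{n} Θ_{b,a} ∘ sh_b holds as operators from words of length n to words of length n+1. -/
open Finsupp

variable {A : Type} [DecidableEq A]

set_option linter.unusedSectionVars false

namespace R2RAux

noncomputable def C (c : A) : (List A →₀ ℂ) →ₗ[ℂ] (List A →₀ ℂ) :=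
  Finsupp.lmapDomain ℂ ℂ (c :: ·)

lemma C_single (c : A) (u : List A) (r : ℂ) :
    C c (Finsupp.single u r) = Finsupp.single (c :: u) r := by
  simp [C, Finsupp.mapDomain_single]

lemma wordSum_nil : wordSum ([] : List (List A)) = 0 := rfl

lemma wordSum_cons (x : List A) (l : List (List A)) :
    wordSum (x :: l) = Finsupp.single x 1 + wordSum l := by
  simp [wordSum]

lemma wordSum_append (l₁ l₂ : List (List A)) :
    wordSum (l₁ ++ l₂) = wordSum l₁ + wordSum l₂ := by
  simp [wordSum]

lemma wordSum_map_cons (c : A) (l : List (List A)) :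
    wordSum (l.map (c :: ·)) = C c (wordSum l) := by
  induction l with
  | nil => simp [wordSum]
  | cons x l ih => simp [wordSum_cons, ih, C_single, map_add]

lemma map_wordSum (F : (List A →₀ ℂ) →ₗ[ℂ] (List A →₀ ℂ)) (l : List (List A)) :
    F (wordSum l) = (l.map (fun u => F (Finsupp.single u 1))).sum := by
  induction l with
  | nil => simp [wordSum]
  | cons x l ih => simp [wordSum_cons, map_add, ih]

lemma sh_single (a : A) (w : List A) :
    shOp a (Finsupp.single w 1) = wordSum (insertions a w) := by
  simp [shOp, Finsupp.linearCombination_single]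

lemma del_single (b : A) (w : List A) :
    delOp b (Finsupp.single w 1) = wordSum (deletions b w) := by
  simp [delOp, Finsupp.linearCombination_single]

lemma rep_single (b a : A) (w : List A) :
    repOp b a (Finsupp.single w 1) = wordSum (replacements b a w) := by
  simp [repOp, Finsupp.linearCombination_single]

lemma r2r_single (w : List A) :
    r2rOp (Finsupp.single w 1) = r2rWord w := by
  simp [r2rOp, Finsupp.linearCombination_single]

lemma sh_nil (a : A) : shOp a (Finsupp.single ([] : List A) 1) = Finsupp.single [a] 1 := by
  rw [sh_single]; simp [insertions, wordSum]

lemma sh_cons (a c : A) (t : List A) :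
    shOp a (Finsupp.single (c :: t) 1) =
      Finsupp.single (a :: c :: t) 1 + C c (shOp a (Finsupp.single t 1)) := by
  rw [sh_single, sh_single, insertions, wordSum_cons, wordSum_map_cons]

lemma del_nil (b : A) : delOp b (Finsupp.single ([] : List A) 1) = 0 := by
  rw [del_single]; simp [deletions, wordSum]

lemma del_cons (b c : A) (t : List A) :
    delOp b (Finsupp.single (c :: t) 1) =
      (if c = b then Finsupp.single t 1 else 0) + C c (delOp b (Finsupp.single t 1)) := by
  rw [del_single, del_single, deletions, wordSum_append, wordSum_map_cons]
  congr 1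
  split <;> simp [wordSum]

lemma rep_nil (b a : A) : repOp b a (Finsupp.single ([] : List A) 1) = 0 := by
  rw [rep_single]; simp [replacements, wordSum]

lemma rep_cons (b a c : A) (t : List A) :
    repOp b a (Finsupp.single (c :: t) 1) =
      (if c = b then Finsupp.single (a :: t) 1 else 0)
        + C c (repOp b a (Finsupp.single t 1)) := by
  rw [rep_single, rep_single, replacements, wordSum_append, wordSum_map_cons]
  congr 1
  split <;> simp [wordSum]

lemma lin_ext {f g : (List A →₀ ℂ) →ₗ[ℂ] (List A →₀ ℂ)}
    (h : ∀ w, f (Finsupp.single w 1) = g (Finsupp.single w 1)) : f = g := by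
  apply Finsupp.lhom_ext
  intro w c
  have : (Finsupp.single w c : List A →₀ ℂ) = c • Finsupp.single w 1 := by
    simp [Finsupp.smul_single]
  rw [this, map_smul, map_smul, h]

lemma shC (a c : A) (x : List A →₀ ℂ) :
    shOp a (C c x) = C a (C c x) + C c (shOp a x) := by
  have h : (shOp a).comp (C c) =
      ((C a).comp (C c) + (C c).comp (shOp a) : (List A →₀ ℂ) →ₗ[ℂ] (List A →₀ ℂ)) :=
    lin_ext fun w => by
      simp only [LinearMap.comp_apply, LinearMap.add_apply, C_single, sh_cons]
  exact DFunLike.congr_fun h x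

lemma delC (b c : A) (x : List A →₀ ℂ) :
    delOp b (C c x) = (if c = b then x else 0) + C c (delOp b x) := by
  by_cases h : c = b
  · subst h
    have h2 : (delOp c).comp (C c) =
        (LinearMap.id + (C c).comp (delOp c) : (List A →₀ ℂ) →ₗ[ℂ] (List A →₀ ℂ)) :=
      lin_ext fun w => by
        simp only [LinearMap.comp_apply, LinearMap.add_apply, C_single, del_cons,
          if_pos rfl, LinearMap.id_apply, if_true]
    simpa using DFunLike.congr_fun h2 x
  · simp only [if_neg h]
    have h2 : (delOp b).comp (C c) =
        ((C c).comp (delOp b) : (List A →₀ ℂ) →ₗ[ℂ] (List A →₀ ℂ)) :=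
      lin_ext fun w => by
        simp only [LinearMap.comp_apply, C_single, del_cons, if_neg h, zero_add]
    simpa using DFunLike.congr_fun h2 x

lemma repC (b a c : A) (x : List A →₀ ℂ) :
    repOp b a (C c x) = (if c = b then C a x else 0) + C c (repOp b a x) := by
  by_cases h : c = b
  · subst h
    have h2 : (repOp c a).comp (C c) =
        ((C a) + (C c).comp (repOp c a) : (List A →₀ ℂ) →ₗ[ℂ] (List A →₀ ℂ)) :=
      lin_ext fun w => by
        simp only [LinearMap.comp_apply, LinearMap.add_apply, C_single, rep_cons, if_pos rfl, if_true]
    simpa using DFunLike.congr_fun h2 x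
  · simp only [if_neg h]
    have h2 : (repOp b a).comp (C c) =
        ((C c).comp (repOp b a) : (List A →₀ ℂ) →ₗ[ℂ] (List A →₀ ℂ)) :=
      lin_ext fun w => by
        simp only [LinearMap.comp_apply, C_single, rep_cons, if_neg h, zero_add]
    simpa using DFunLike.congr_fun h2 x

lemma sh_sh_single (a b : A) (w : List A) :
    shOp a (shOp b (Finsupp.single w 1)) = shOp b (shOp a (Finsupp.single w 1)) := by
  induction w with
  | nil =>
    simp only [sh_nil]
    rw [show [b] = b :: ([] : List A) from rfl, show [a] = a :: ([] : List A) from rfl,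
      sh_cons, sh_cons, sh_nil, sh_nil, C_single, C_single]
    abel
  | cons c t ih =>
    rw [sh_cons b, sh_cons a, map_add, map_add, sh_cons a, sh_cons b, shC, shC,
      sh_cons a, sh_cons b, map_add, map_add, C_single, C_single, ih]
    abel

lemma sh_sh (a b : A) (x : List A →₀ ℂ) :
    shOp a (shOp b x) = shOp b (shOp a x) := by
  have h : (shOp a).comp (shOp b) = ((shOp b).comp (shOp a) : (List A →₀ ℂ) →ₗ[ℂ] _) :=
    lin_ext fun w => sh_sh_single a b w
  exact DFunLike.congr_fun h x


lemma del_sh (b a : A) (w : List A) :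
    delOp b (shOp a (Finsupp.single w 1)) =
      shOp a (delOp b (Finsupp.single w 1)) + repOp b a (Finsupp.single w 1)
        + (if b = a then ((w.length + 1 : ℕ) : ℂ) • Finsupp.single w 1 else 0) := by
  induction w with
  | nil =>
    by_cases h : b = a
    · subst h; simp [sh_nil, del_cons, del_nil, rep_nil]
    · have hab : ¬ a = b := fun hh => h hh.symm
      simp [sh_nil, del_cons, del_nil, rep_nil, h, hab]
  | cons c t ih =>
    by_cases hba : b = a
    · subst hba
      by_cases hcb : c = b
      · subst hcb
        simp only [sh_cons, map_add, del_cons, delC, shC, rep_cons, ih, C_single, map_smul,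
          map_zero, List.length_cons, if_pos rfl, if_true, eq_self_iff_true,
          apply_ite (C c), apply_ite (shOp c)]
        push_cast
        module
      · simp only [sh_cons, map_add, del_cons, delC, shC, rep_cons, ih, C_single, map_smul,
          map_zero, List.length_cons, if_pos rfl, if_neg hcb, if_true, eq_self_iff_true,
          apply_ite (C c), apply_ite (C b), apply_ite (shOp b)]
        push_cast
        module
    · have hab : ¬ a = b := fun hh => hba hh.symm
      by_cases hcb : c = b
      · subst hcb
        simp only [sh_cons, map_add, del_cons, delC, shC, rep_cons, ih, C_single, map_smul,
          map_zero, List.length_cons, if_pos rfl, if_neg hba, if_neg hab, if_true,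
          eq_self_iff_true, apply_ite (C c), apply_ite (C a), apply_ite (shOp a)]
        abel
      · simp only [sh_cons, map_add, del_cons, delC, shC, rep_cons, ih, C_single, map_smul,
          map_zero, List.length_cons, if_neg hba, if_neg hab, if_neg hcb,
          apply_ite (C c), apply_ite (C a), apply_ite (shOp a)]
        abel

lemma rep_sh (b a : A) (w : List A) :
    repOp b a (shOp b (Finsupp.single w 1)) =
      shOp a (Finsupp.single w 1) + shOp b (repOp b a (Finsupp.single w 1)) := by
  induction w with
  | nil => simp [sh_nil, rep_cons, rep_nil]
  | cons c t ih =>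
    by_cases hcb : c = b
    · subst hcb
      simp only [sh_cons, map_add, rep_cons, repC, shC, ih, C_single, map_zero,
        if_pos rfl, if_true, eq_self_iff_true, sh_cons,
        apply_ite (C c), apply_ite (C a), apply_ite (shOp c)]
      abel
    · simp only [sh_cons, map_add, rep_cons, repC, shC, ih, C_single, map_zero,
        if_pos rfl, if_neg hcb, if_true, eq_self_iff_true,
        apply_ite (C c), apply_ite (C a), apply_ite (shOp b)]
      abel

lemma insertions_eq (a : A) (u : List A) :
    insertions a u = (List.range (u.length + 1)).map (fun j => u.insertIdx j a) := by
  induction u with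
  | nil => simp [insertions, List.range_succ, List.insertIdx_zero]
  | cons b t ih =>
    rw [insertions, ih, List.length_cons, List.range_succ_eq_map (n := t.length + 1)]
    simp [List.map_map, Function.comp_def, List.insertIdx_succ_cons, List.insertIdx_zero]

lemma wordSum_range_map (f : ℕ → List A) (k : ℕ) :
    wordSum ((List.range k).map f) = ∑ j ∈ Finset.range k, Finsupp.single (f j) (1 : ℂ) := by
  induction k with
  | zero => simp [wordSum]
  | succ k ih =>
    rw [List.range_succ, List.map_append, wordSum_append, ih, Finset.sum_range_succ]
    simp [wordSum]

lemma r2rWord_eq (w : List A) :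
    r2rWord w = ∑ i ∈ Finset.range w.length,
      (match w[i]? with
       | Option.none => 0
       | Option.some c => wordSum (insertions c (w.eraseIdx i))) := by
  apply Finset.sum_congr rfl
  intro i hi
  rw [Finset.mem_range] at hi
  rw [List.getElem?_eq_getElem hi]
  show _ = wordSum (insertions (w.get ⟨i, hi⟩) (w.eraseIdx i))
  have hlen : (w.eraseIdx i).length + 1 = w.length := by
    rw [List.length_eraseIdx, if_pos hi]
    omega
  rw [insertions_eq, wordSum_range_map, hlen]
  apply Finset.sum_congr rfl
  intro j _
  simp [moveCard, List.getElem?_eq_getElem hi]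

lemma deletions_sum [Fintype A] (w : List A) (f : A → List A → (List A →₀ ℂ)) :
    ∑ b : A, ((deletions b w).map (f b)).sum =
      ∑ i ∈ Finset.range w.length,
        (match w[i]? with
         | Option.none => 0
         | Option.some c => f c (w.eraseIdx i)) := by
  induction w generalizing f with
  | nil => simp [deletions]
  | cons c t ih =>
    have step : ∀ b : A, ((deletions b (c :: t)).map (f b)).sum =
        (if c = b then f b t else 0) + ((deletions b t).map (fun u => f b (c :: u))).sum := by
      intro b
      rw [deletions, List.map_append, List.sum_append, List.map_map]
      refine congrArg₂ (· + ·) ?_ rfl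
      split <;> simp
    simp only [step]
    rw [Finset.sum_add_distrib, Finset.sum_ite_eq Finset.univ c (fun b => f b t),
      if_pos (Finset.mem_univ c), ih (fun b u => f b (c :: u)), List.length_cons,
      Finset.sum_range_succ']
    simp only [List.getElem?_cons_succ, List.getElem?_cons_zero, List.eraseIdx_cons_succ,
      List.eraseIdx_cons_zero]
    exact add_comm _ _

lemma r2r_single_decomp [Fintype A] (w : List A) :
    r2rOp (Finsupp.single w 1) = ∑ b : A, shOp b (delOp b (Finsupp.single w 1)) := by
  have h1 : ∀ b : A, shOp b (delOp b (Finsupp.single w (1 : ℂ))) =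
      ((deletions b w).map (fun u => wordSum (insertions b u))).sum := by
    intro b
    rw [del_single, map_wordSum]
    simp only [sh_single]
  simp only [h1]
  rw [deletions_sum w (fun b u => wordSum (insertions b u)), r2r_single, r2rWord_eq]

lemma r2r_decomp [Fintype A] (x : List A →₀ ℂ) :
    r2rOp x = ∑ b : A, shOp b (delOp b x) := by
  have h : (r2rOp : (List A →₀ ℂ) →ₗ[ℂ] (List A →₀ ℂ)) =
      ∑ b : A, (shOp b).comp (delOp b) :=
    lin_ext fun w => by
      rw [r2r_single_decomp]
      simp [LinearMap.sum_apply]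
  rw [h]
  simp [LinearMap.sum_apply]

end R2RAux

open R2RAux

/-- **Theorem 38, Equation (17).** For words of length `n` over an alphabet of `n`
letters, `R2R_{n+1} ∘ sh_a - sh_a ∘ R2R_n = sh_a + ∑_b Θ_{b,a} ∘ sh_b`. -/
theorem r2r_sh_commutator_eq' (n : ℕ) [Fintype A] (hcard : Fintype.card A = n)
    (a : A) (w : List A) (hw : w.length = n) :
    r2rOp (shOp a (Finsupp.single w (1 : ℂ))) -
      shOp a (r2rOp (Finsupp.single w (1 : ℂ))) =
    shOp a (Finsupp.single w (1 : ℂ)) +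
      ∑ b : A, repOp b a (shOp b (Finsupp.single w (1 : ℂ))) := by
  rw [r2r_decomp, r2r_decomp]
  simp only [del_sh, map_add, map_sum, rep_sh]
  simp only [apply_ite (shOp _), map_smul, map_zero]
  rw [Finset.sum_add_distrib, Finset.sum_add_distrib, Finset.sum_add_distrib,
    Finset.sum_ite_eq' Finset.univ a (fun b => ((w.length + 1 : ℕ) : ℂ) • shOp b (Finsupp.single w 1)),
    if_pos (Finset.mem_univ a), Finset.sum_const, Finset.card_univ, hcard, hw]
  have hswap : ∀ b : A, shOp b (shOp a (delOp b (Finsupp.single w (1 : ℂ)))) =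
      shOp a (shOp b (delOp b (Finsupp.single w (1 : ℂ)))) := fun b => sh_sh b a _
  simp only [hswap]
  push_cast
  have hn : (n : ℂ) • shOp a (Finsupp.single w (1 : ℂ)) = n • shOp a (Finsupp.single w 1) := by
    rw [Nat.cast_smul_eq_nsmul]
  rw [← hn]
  module
end

section
/- The signed random-to-random operator R2R_n^± and the random-to-random operator R2R_n are conjugate linear transformations of the space of injective words: R2R_n^± = T ∘ R2R_n ∘ T^{-1}, where T is the linear map multiplying each injective word w by the sign of the unique permutation sorting its letters into increasing order. -/
open Finsupp

variable {A : Type} [DecidableEq A]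

/-- The sign of an injective word `w` of length `n` on `Fin n`: the sign of the unique
permutation `σ` with `w_{σ 1} < w_{σ 2} < ⋯ < w_{σ n}`, equivalently (since the unique
increasing bijection `Fin n → Fin n` is the identity) the sign of the permutation
`i ↦ w i`.  (Junk value `1` for non-injective words.) -/
noncomputable def signWord (n : ℕ) (w : List (Fin n)) : ℂ :=
  if h : w.Nodup ∧ w.length = n then
    ((Equiv.Perm.sign (Equiv.ofBijective (fun i : Fin n => w.get (Fin.cast h.2.symm i))
      ((Finite.injective_iff_bijective).mp
        ((List.nodup_iff_injective_get.mp h.1).comp (Fin.cast_injective h.2.symm)))) : ℤ) : ℂ)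
  else 1

/-- The linear map `T : w ↦ sign(w) • w` on the span of injective words. -/
noncomputable def signTwist (n : ℕ) : (List (Fin n) →₀ ℂ) →ₗ[ℂ] (List (Fin n) →₀ ℂ) :=
  Finsupp.linearCombination ℂ (fun w => signWord n w • Finsupp.single w (1 : ℂ))

/-- The signed random-to-random operator on a single word: each move of a letter from
position `u` to position `v` is weighted by `(-1) ^ |v - u|`. -/
noncomputable def r2rpmWord (n : ℕ) (w : List (Fin n)) : List (Fin n) →₀ ℂ :=
  ∑ i ∈ Finset.range w.length, ∑ j ∈ Finset.range w.length,
    ((-1 : ℂ) ^ (max i j - min i j)) • Finsupp.single (moveCard w i j) (1 : ℂ)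

/-- The signed random-to-random operator `R2R_n^±`. -/
noncomputable def r2rpmOp (n : ℕ) : (List (Fin n) →₀ ℂ) →ₗ[ℂ] (List (Fin n) →₀ ℂ) :=
  Finsupp.linearCombination ℂ (r2rpmWord n)


section Aux

variable {α : Type}

lemma moveCard_eq (w : List α) {i : ℕ} (j : ℕ) (hi : i < w.length) :
    moveCard w i j = (w.eraseIdx i).insertIdx j w[i] := by
  simp [moveCard, List.getElem?_eq_getElem hi]

lemma length_eraseIdx' (w : List α) {i : ℕ} (hi : i < w.length) :
    (w.eraseIdx i).length = w.length - 1 := by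
  rw [List.length_eraseIdx]; simp [hi]

lemma moveCard_length (w : List α) {i j : ℕ} (hi : i < w.length) (hj : j < w.length) :
    (moveCard w i j).length = w.length := by
  rw [moveCard_eq w j hi, List.length_insertIdx_of_le_length (by rw [length_eraseIdx' w hi]; omega),
    length_eraseIdx' w hi]
  omega

lemma moveCard_perm [DecidableEq α] (w : List α) {i j : ℕ} (hi : i < w.length)
    (hj : j < w.length) : (moveCard w i j).Perm w := by
  rw [moveCard_eq w j hi]
  refine (List.perm_insertIdx _ _ (by rw [length_eraseIdx' w hi]; omega)).trans ?_
  exact ((List.erase_getElem hi).cons w[i]).symm.trans (List.perm_cons_erase (w.getElem_mem hi)).symm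

lemma moveCard_self (w : List α) : ∀ (i : ℕ), i < w.length → moveCard w i i = w := by
  induction w with
  | nil => simp
  | cons a t ih =>
    intro i hi
    cases i with
    | zero => simp [moveCard]
    | succ i =>
      have hi' : i < t.length := by simpa using hi
      rw [moveCard_eq _ _ hi] at *
      simp only [List.eraseIdx_cons_succ, List.insertIdx_succ_cons, List.getElem_cons_succ]
      rw [← moveCard_eq t i hi', ih i hi']

lemma moveCard_cons (a : α) (t : List α) (i j : ℕ) :
    moveCard (a :: t) (i + 1) (j + 1) = a :: moveCard t i j := by
  unfold moveCard
  cases h : t[i]? with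
  | none => simp [h]
  | some c => simp [h]

lemma moveCard_swap : ∀ (k : ℕ) (w : List α), k + 1 < w.length →
    moveCard w k (k + 1) = moveCard w (k + 1) k := by
  intro k
  induction k with
  | zero =>
    intro w hw
    match w, hw with
    | a :: b :: t, _ => rfl
  | succ k ih =>
    intro w hw
    match w, hw with
    | a :: t, hw =>
      rw [moveCard_cons, show k+1+1 = (k+1)+1 from rfl, moveCard_cons, ih t (by simpa using hw)]

lemma moveCard_swap_getElem? : ∀ (k : ℕ) (w : List α), k + 1 < w.length → ∀ (m : ℕ),
    (moveCard w k (k + 1))[m]? =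
      if m = k then w[k+1]? else if m = k + 1 then w[k]? else w[m]? := by
  intro k
  induction k with
  | zero =>
    intro w hw m
    match w, hw with
    | a :: b :: t, _ =>
      have : moveCard (a :: b :: t) 0 1 = b :: a :: t := rfl
      rw [this]
      match m with
      | 0 => simp
      | 1 => simp
      | (m+2) => simp
  | succ k ih =>
    intro w hw m
    match w, hw with
    | a :: t, hw =>
      rw [show k+1+1 = (k+1)+1 from rfl, moveCard_cons]
      have ht : k + 1 < t.length := by simpa using hw
      match m with
      | 0 => simp
      | (m+1) =>
        simp only [List.getElem?_cons_succ]
        rw [ih t ht m]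
        by_cases h1 : m = k <;> by_cases h2 : m = k + 1 <;> simp [h1, h2]

lemma moveCard_swap_getElem {k : ℕ} (w : List α) (hk : k + 1 < w.length) {m : ℕ}
    (hm : m < w.length) (hm' : m < (moveCard w k (k + 1)).length) :
    (moveCard w k (k + 1))[m] =
      if h1 : m = k then w[k+1] else if h2 : m = k + 1 then w[k]'(by omega)
        else w[m] := by
  have h2 := moveCard_swap_getElem? k w hk m
  by_cases h1 : m = k
  · subst h1
    rw [if_pos rfl, List.getElem?_eq_getElem hm', List.getElem?_eq_getElem hk] at h2
    rw [dif_pos rfl]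
    exact Option.some.inj h2
  · by_cases h3 : m = k + 1
    · subst h3
      rw [if_neg h1, if_pos rfl, List.getElem?_eq_getElem hm',
        List.getElem?_eq_getElem (by omega : k < w.length)] at h2
      rw [dif_neg h1, dif_pos rfl]
      exact Option.some.inj h2
    · rw [if_neg h1, if_neg h3, List.getElem?_eq_getElem hm',
        List.getElem?_eq_getElem hm] at h2
      rw [dif_neg h1, dif_neg h3]
      exact Option.some.inj h2

lemma moveCard_comp_up (w : List α) {i j : ℕ} (hij : i < j) (hj : j < w.length) :
    moveCard w i j = moveCard (moveCard w i (i + 1)) (i + 1) j := by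
  have hi : i < w.length := lt_trans hij hj
  have h1 : i + 1 ≤ (w.eraseIdx i).length := by rw [length_eraseIdx' w hi]; omega
  have hlen : i + 1 < ((w.eraseIdx i).insertIdx (i+1) w[i]).length := by
    rw [List.length_insertIdx_of_le_length h1, length_eraseIdx' w hi]; omega
  rw [moveCard_eq w (i+1) hi,
    moveCard_eq ((w.eraseIdx i).insertIdx (i+1) w[i]) j hlen,
    List.getElem_insertIdx_self hlen, List.eraseIdx_insertIdx_self, ← moveCard_eq w j hi]

lemma moveCard_comp_down (w : List α) {i j : ℕ} (hij : j < i) (hi : i < w.length) :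
    moveCard w i j = moveCard (moveCard w i (i - 1)) (i - 1) j := by
  have h1 : i - 1 ≤ (w.eraseIdx i).length := by rw [length_eraseIdx' w hi]; omega
  have hlen : i - 1 < ((w.eraseIdx i).insertIdx (i-1) w[i]).length := by
    rw [List.length_insertIdx_of_le_length h1, length_eraseIdx' w hi]; omega
  rw [moveCard_eq w (i-1) hi,
    moveCard_eq ((w.eraseIdx i).insertIdx (i-1) w[i]) j hlen,
    List.getElem_insertIdx_self hlen, List.eraseIdx_insertIdx_self, ← moveCard_eq w j hi]

lemma signWord_mul {n : ℕ} (w w' : List (Fin n)) (h : w.Nodup ∧ w.length = n)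
    (h' : w'.Nodup ∧ w'.length = n) (σ : Equiv.Perm (Fin n))
    (hrel : ∀ m : Fin n, w'.get (Fin.cast h'.2.symm m) = w.get (Fin.cast h.2.symm (σ m))) :
    signWord n w' = ((Equiv.Perm.sign σ : ℤ) : ℂ) * signWord n w := by
  rw [signWord, dif_pos h', signWord, dif_pos h]
  have key : (Equiv.ofBijective (fun i : Fin n => w'.get (Fin.cast h'.2.symm i))
      ((Finite.injective_iff_bijective).mp
        ((List.nodup_iff_injective_get.mp h'.1).comp (Fin.cast_injective h'.2.symm)))) =
      (Equiv.ofBijective (fun i : Fin n => w.get (Fin.cast h.2.symm i))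
      ((Finite.injective_iff_bijective).mp
        ((List.nodup_iff_injective_get.mp h.1).comp (Fin.cast_injective h.2.symm)))) * σ := by
    apply Equiv.ext
    intro m
    simp only [Equiv.Perm.mul_apply, Equiv.ofBijective_apply]
    exact hrel m
  rw [key, map_mul]
  push_cast [Units.val_mul]
  ring

lemma signWord_swap {n k : ℕ} (w : List (Fin n)) (hnd : w.Nodup) (hw : w.length = n)
    (hk : k + 1 < n) : signWord n (moveCard w k (k + 1)) = - signWord n w := by
  have hkw : k + 1 < w.length := by omega
  have hperm := moveCard_perm w (by omega : k < w.length) hkw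
  have hnd' : (moveCard w k (k + 1)).Nodup := hperm.nodup_iff.mpr hnd
  have hl' : (moveCard w k (k + 1)).length = n := by
    rw [moveCard_length w (by omega) hkw, hw]
  set a : Fin n := ⟨k, by omega⟩ with ha
  set b : Fin n := ⟨k + 1, hk⟩ with hb
  have hab : a ≠ b := by simp [ha, hb, Fin.ext_iff]
  rw [signWord_mul w (moveCard w k (k + 1)) ⟨hnd, hw⟩ ⟨hnd', hl'⟩ (Equiv.swap a b) ?_]
  · rw [Equiv.Perm.sign_swap hab]
    push_cast
    ring
  · intro m
    simp only [List.get_eq_getElem, Fin.coe_cast]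
    have hm : (m : ℕ) < w.length := by omega
    have hm' : (m : ℕ) < (moveCard w k (k + 1)).length := by omega
    rw [moveCard_swap_getElem w hkw hm hm']
    rcases eq_or_ne m a with h1 | h1
    · subst h1
      rw [Equiv.swap_apply_left]
      simp [ha, hb]
    · rcases eq_or_ne m b with h2 | h2
      · subst h2
        rw [Equiv.swap_apply_right]
        have h1' : ((b : Fin n) : ℕ) ≠ k := by simp [hb]
        rw [dif_neg h1', dif_pos rfl]
      · rw [Equiv.swap_apply_of_ne_of_ne h1 h2]
        have h1' : (m : ℕ) ≠ k := fun h => h1 (Fin.ext h)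
        have h2' : (m : ℕ) ≠ k + 1 := fun h => h2 (Fin.ext h)
        rw [dif_neg h1', dif_neg h2']

lemma signWord_moveCard (n : ℕ) : ∀ (d : ℕ) (w : List (Fin n)), w.Nodup → w.length = n →
    ∀ i j : ℕ, i < n → j < n → max i j - min i j = d →
    signWord n (moveCard w i j) = (-1 : ℂ) ^ d * signWord n w := by
  intro d
  induction d with
  | zero =>
    intro w hnd hw i j hi hj hd
    have hij : i = j := by omega
    subst hij
    rw [moveCard_self w i (by omega)]
    simp
  | succ d ih =>
    intro w hnd hw i j hi hj hd
    have hiw : i < w.length := by omega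
    have hjw : j < w.length := by omega
    rcases lt_or_gt_of_ne (show i ≠ j by omega) with hij | hij
    · have hk : i + 1 < n := by omega
      have hnd1 : (moveCard w i (i+1)).Nodup :=
        (moveCard_perm w hiw (by omega)).nodup_iff.mpr hnd
      have hl1 : (moveCard w i (i+1)).length = n := by
        rw [moveCard_length w hiw (by omega), hw]
      rw [moveCard_comp_up w hij hjw,
        ih (moveCard w i (i+1)) hnd1 hl1 (i+1) j hk hj (by omega),
        signWord_swap w hnd hw hk, pow_succ]
      ring
    · have hi1 : i - 1 + 1 = i := by omega
      have hsw : signWord n (moveCard w i (i - 1)) = - signWord n w := by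
        have h := signWord_swap w hnd hw (show (i-1)+1 < n by omega)
        have h2 := moveCard_swap (i-1) w (by omega)
        rw [hi1] at h h2
        rw [h2] at h
        exact h
      have hnd1 : (moveCard w i (i-1)).Nodup :=
        (moveCard_perm w hiw (by omega)).nodup_iff.mpr hnd
      have hl1 : (moveCard w i (i-1)).length = n := by
        rw [moveCard_length w hiw (by omega), hw]
      rw [moveCard_comp_down w hij hiw,
        ih (moveCard w i (i-1)) hnd1 hl1 (i-1) j (by omega) hj (by omega),
        hsw, pow_succ]
      ring

end Aux

/-- `R2R_n^±` and `R2R_n` are conjugate via `T`: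
`R2R_n^± = T ∘ R2R_n ∘ T⁻¹` on the span of injective words, equivalently
`R2R_n^± ∘ T = T ∘ R2R_n` there. -/
theorem r2rpm_conj_r2r (n : ℕ) (w : List (Fin n)) (hnd : w.Nodup) (hw : w.length = n) :
    r2rpmOp n (signTwist n (Finsupp.single w (1 : ℂ))) =
      signTwist n (r2rOp (Finsupp.single w (1 : ℂ))) := by
  rw [signTwist, Finsupp.linearCombination_single, one_smul,
    r2rpmOp, map_smul, Finsupp.linearCombination_single, one_smul,
    r2rOp, Finsupp.linearCombination_single, one_smul, r2rWord]
  simp only [map_sum]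
  rw [r2rpmWord, Finset.smul_sum]
  refine Finset.sum_congr rfl ?_
  intro i hi
  rw [Finset.smul_sum]
  refine Finset.sum_congr rfl ?_
  intro j hj
  rw [Finsupp.linearCombination_single, one_smul,
    signWord_moveCard n (max i j - min i j) w hnd hw i j
      (by rw [← hw]; exact Finset.mem_range.mp hi)
      (by rw [← hw]; exact Finset.mem_range.mp hj) rfl,
    smul_smul, mul_comm]
end
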